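/- Let F be a finite collection of open arcs of a circle C whose union is C, and let K = {K_0, ..., K_{n−1}} ⊆ F be a subcollection covering C with n minimal and with no K_i contained in another arc of F, cyclically ordered clockwise. If P is a longest chain in F, then P ∩ K is nonempty and the set of indices {i : K_i ∈ P} is a contiguous (cyclically consecutive) subset of ℤ_n. -/

import Mathlib

set_option maxHeartbeats 1000000


noncomputable section

/-- The circle, modeled as `ℝ / ℤ`. -/
abbrev Circ : Type := AddCircle (1 : ℝ)

/-- The open arc starting at `a` and running clockwise for length `d`. -/
def arc (a : Circ) (d : ℝ) : Set Circ :=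
  (fun t : ℝ => a + (↑t : Circ)) '' Set.Ioo 0 d

/-- An open (proper) arc of the circle. -/
def IsArc (A : Set Circ) : Prop :=
  ∃ (a : Circ) (d : ℝ), 0 < d ∧ d < 1 ∧ A = arc a d

/-- A chain in `F`: a list of distinct members of `F` with consecutive members
intersecting. -/
def ArcChain (F : Set (Set Circ)) (P : List (Set Circ)) : Prop :=
  P.Nodup ∧ (∀ A ∈ P, A ∈ F) ∧ List.Chain' (fun A B => (A ∩ B).Nonempty) P

/-- A longest chain in `F`. -/
def IsLongestArcChain (F : Set (Set Circ)) (P : List (Set Circ)) : Prop :=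
  ArcChain F P ∧ ∀ Q, ArcChain F Q → Q.length ≤ P.length

/-- The points `p 0, …, p (n-1)` occur consecutively in clockwise order on the circle. -/
def CyclicallyOrdered {n : ℕ} (p : Fin n → Circ) : Prop :=
  ∃ (a : Circ) (t : Fin n → ℝ), StrictMono t ∧ (∀ i, t i ∈ Set.Ico (0 : ℝ) 1) ∧
    ∀ i, p i = a + (↑(t i) : Circ)

/-- The open clockwise arc strictly between the points `p` and `q`. -/
def arcBetween (p q : Circ) : Set Circ :=
  {x | ∃ s u : ℝ, 0 < s ∧ s < u ∧ u < 1 ∧ x = p + (↑s : Circ) ∧ q = p + (↑u : Circ)}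

/-- `A` precedes `B` in the list `L`. -/
def Precedes (L : List (Set Circ)) (A B : Set Circ) : Prop :=
  ∃ i j : ℕ, i < j ∧ j < L.length ∧ L.getD i ∅ = A ∧ L.getD j ∅ = B

/-- `ΔK_i = {x : ℓ(K_{i+1}) < x < r(K_i)}`, for arcs `K i = arc (c i) (d i)`. -/
def deltaK {n : ℕ} [NeZero n] (c : Fin n → Circ) (d : Fin n → ℝ) (i : Fin n) :
    Set Circ :=
  arcBetween (c (i + 1)) (c i + (↑(d i) : Circ))


open Set

lemma ccoe_add (x y : ℝ) : ((x + y : ℝ) : Circ) = ↑x + ↑y := rfl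
lemma ccoe_sub (x y : ℝ) : ((x - y : ℝ) : Circ) = ↑x - ↑y := rfl

lemma coe_eq_zero_iff' {r : ℝ} : ((r : ℝ) : Circ) = 0 ↔ ∃ m : ℤ, r = m := by
  rw [AddCircle.coe_eq_zero_iff]
  constructor
  · rintro ⟨m, hm⟩; exact ⟨m, by simpa [zsmul_eq_mul] using hm.symm⟩
  · rintro ⟨m, hm⟩; exact ⟨m, by simp [zsmul_eq_mul, hm]⟩

lemma coe_eq_coe_iff {w w' : ℝ} : ((w : ℝ) : Circ) = ↑w' ↔ ∃ m : ℤ, w = w' + m := by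
  constructor
  · intro h
    have h2 : ((w - w' : ℝ) : Circ) = 0 := by
      rw [ccoe_sub, h]; simp
    obtain ⟨m, hm⟩ := coe_eq_zero_iff'.1 h2
    exact ⟨m, by linarith⟩
  · rintro ⟨m, hm⟩
    subst hm
    have h2 : ((m : ℝ) : Circ) = 0 := coe_eq_zero_iff'.2 ⟨m, rfl⟩
    rw [ccoe_add, h2, add_zero]

lemma coe_add_int (w : ℝ) (m : ℤ) : ((w + m : ℝ) : Circ) = ↑w :=
  coe_eq_coe_iff.2 ⟨m, rfl⟩

lemma coe_add_nat (w : ℝ) (m : ℕ) : ((w + m : ℝ) : Circ) = ↑w := by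
  have := coe_add_int w m; push_cast at this ⊢; exact this

lemma mem_arc_iff {a : Circ} {b d : ℝ} {x : Circ} :
    x ∈ arc (a + ↑b) d ↔ ∃ ξ ∈ Ioo b (b + d), x = a + ↑ξ := by
  constructor
  · rintro ⟨s, hs, rfl⟩
    exact ⟨b + s, ⟨by linarith [hs.1], by linarith [hs.2]⟩, by
      show a + ↑b + ↑s = a + ↑(b + s); rw [ccoe_add, add_assoc]⟩
  · rintro ⟨ξ, hξ, rfl⟩
    refine ⟨ξ - b, ⟨by simp [hξ.1], by have := hξ.2; simp; linarith⟩, ?_⟩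
    show a + ↑b + ↑(ξ - b) = a + ↑ξ
    rw [ccoe_sub]; abel

lemma exists_rep (a : Circ) (x : Circ) : ∃ w : ℝ, x = a + ↑w := by
  obtain ⟨w, hw⟩ := QuotientAddGroup.mk_surjective (x - a)
  exact ⟨w, by rw [show ((w:ℝ):Circ) = x - a from hw]; abel⟩

lemma exists_lift_Ioc (a : Circ) (x : Circ) (c : ℝ) :
    ∃ ξ ∈ Ioc c (c + 1), x = a + ↑ξ := by
  obtain ⟨w, hw⟩ := exists_rep a x
  refine ⟨w + (⌊c - w⌋ + 1), ⟨?_, ?_⟩, by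
    rw [show ((⌊c - w⌋ : ℝ) + 1 : ℝ) = ((⌊c - w⌋ + 1 : ℤ) : ℝ) by push_cast; ring,
      coe_add_int]; exact hw⟩
  · have := Int.lt_floor_add_one (c - w); linarith
  · have := Int.floor_le (c - w); linarith

section Chains

variable {F : Set (Set Circ)} {P : List (Set Circ)}

lemma chain_cons_longer (hP : ArcChain F P) {B : Set Circ} (hBF : B ∈ F) (hBP : B ∉ P)
    (h : ∀ (hne : P ≠ []), (B ∩ P.head hne).Nonempty) :
    ∃ Q, ArcChain F Q ∧ Q.length = P.length + 1 := by
  refine ⟨B :: P, ⟨List.nodup_cons.2 ⟨hBP, hP.1⟩, ?_, ?_⟩, rfl⟩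
  · intro A hA
    rcases List.mem_cons.1 hA with rfl | hA
    · exact hBF
    · exact hP.2.1 _ hA
  · rcases P with _ | ⟨A, P'⟩
    · exact List.isChain_singleton _
    · exact List.IsChain.cons_cons (h (by simp)) hP.2.2

lemma chain_insert_longer (hP : ArcChain F P) {B : Set Circ} (hBF : B ∈ F) (hBP : B ∉ P)
    {k : ℕ} (hk : k + 1 < P.length)
    (h1 : (P[k]'(by omega) ∩ B).Nonempty) (h2 : (B ∩ P[k+1]'hk).Nonempty) :
    ∃ Q, ArcChain F Q ∧ Q.length = P.length + 1 := by
  have hkl : k < P.length := by omega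
  set X := P.take (k+1) with hX
  set Y := P.drop (k+1) with hY
  have hPXY : P = X ++ Y := (List.take_append_drop _ _).symm
  have hYc : Y = P[k+1] :: P.drop (k+2) := List.drop_eq_getElem_cons hk
  have hXc : X = P.take k ++ [P[k]] := by
    rw [hX, List.take_succ]; congr 1; simp [List.getElem?_eq_getElem hkl]
  refine ⟨X ++ B :: Y, ⟨?_, ?_, ?_⟩, ?_⟩
  · rw [List.nodup_middle, ← hPXY]
    exact List.nodup_cons.2 ⟨hBP, hP.1⟩
  · intro A hA
    rcases List.mem_append.1 hA with hA | hA
    · exact hP.2.1 _ (hPXY ▸ List.mem_append.2 (Or.inl hA))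
    · rcases List.mem_cons.1 hA with rfl | hA
      · exact hBF
      · exact hP.2.1 _ (hPXY ▸ List.mem_append.2 (Or.inr hA))
  · unfold ArcChain List.Chain' at hP; unfold List.Chain'; rw [List.isChain_split]
    constructor
    · rw [List.isChain_append]
      refine ⟨(hPXY ▸ hP.2.2).left_of_append, List.isChain_singleton _, ?_⟩
      intro x hx y hy
      simp only [List.head?_cons, Option.mem_def, Option.some.injEq] at hy
      subst hy
      rw [hXc, List.getLast?_concat] at hx
      simp only [Option.mem_def, Option.some.injEq] at hx
      subst hx; exact h1
    · rw [hYc]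
      refine List.IsChain.cons_cons h2 ?_
      have : List.Chain' (fun A B => (A ∩ B).Nonempty) Y := by
        rw [hPXY] at hP; exact hP.2.2.right_of_append
      rwa [hYc] at this
  · rw [hPXY]; simp; omega

lemma consec_decomp (hP : List.Chain' (fun A B => (A ∩ B).Nonempty) P) {k : ℕ}
    (hk : k + 1 < P.length) : (P[k]'(by omega) ∩ P[k+1]'hk).Nonempty := by
  unfold List.Chain' at hP; rw [List.isChain_iff_getElem] at hP
  have := hP k (by omega)
  simpa using this

end Chains

section Ext

variable (n : ℕ) [NeZero n]

lemma npos : 0 < n := Nat.pos_of_ne_zero (NeZero.ne n)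

def idx (z : ℕ) : Fin n := ⟨z % n, Nat.mod_lt _ (npos n)⟩

def extf (f : Fin n → ℝ) (z : ℕ) : ℝ := f (idx n z) + (z / n : ℕ)

lemma idx_add_n (z : ℕ) : idx n (z + n) = idx n z := by
  simp [idx, Nat.add_mod_right]

lemma ext_add_n (f : Fin n → ℝ) (z : ℕ) : extf n f (z + n) = extf n f z + 1 := by
  simp [extf, idx_add_n, Nat.add_div_right _ (npos n)]
  push_cast; ring

lemma step_no_wrap {z : ℕ} (h : z % n + 1 < n) :
    (z + 1) % n = z % n + 1 ∧ (z + 1) / n = z / n := by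
  have h0 : z + 1 = (z % n + 1) + n * (z / n) := by
    have := Nat.div_add_mod z n; omega
  constructor
  · rw [h0, Nat.add_mul_mod_self_left, Nat.mod_eq_of_lt h]
  · rw [h0, Nat.add_mul_div_left _ _ (npos n), Nat.div_eq_of_lt h, Nat.zero_add]

lemma step_wrap {z : ℕ} (h : z % n + 1 = n) :
    (z + 1) % n = 0 ∧ (z + 1) / n = z / n + 1 := by
  have h0 : z + 1 = n * (z / n + 1) := by
    have h1 := Nat.div_add_mod z n
    have : n * (z / n + 1) = n * (z / n) + n := by ring
    omega
  constructor
  · rw [h0, Nat.mul_mod_right]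
  · rw [h0, Nat.mul_div_cancel_left _ (npos n)]

end Ext

section Geom

variable {F : Set (Set Circ)} {n : ℕ} [NeZero n] {K : Fin n → Set Circ}
  {d : Fin n → ℝ} {a : Circ} {τ : Fin n → ℝ} {pr : Fin n → ℝ}

lemma geom_contra
    (hF : ∀ A ∈ F, IsArc A)
    (hτ : StrictMono τ) (hτm : ∀ i, τ i ∈ Set.Ico (0:ℝ) 1)
    (hKarc : ∀ i, K i = arc (a + ↑(τ i)) (d i)) (hd0 : ∀ i, 0 < d i) (hd1 : ∀ i, d i < 1)
    (hKF : ∀ i, K i ∈ F) (hKinj : Function.Injective K)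
    (hKcov : (⋃ i, K i) = Set.univ)
    (hnosub : ∀ i, ∀ A ∈ F, K i ⊆ A → K i = A)
    (hpr : ∀ i, pr i ∈ Set.Ioo (τ i) (τ i + d i))
    (hpriv : ∀ s t, s ≠ t → (a + ↑(pr t)) ∉ K s)
    {P : List (Set Circ)} (hP : IsLongestArcChain F P)
    {z1 z2 z3 z4 : ℕ} (hz1 : n ≤ z1) (h12 : z1 < z2) (h23 : z2 < z3) (h34 : z3 < z4)
    (h41 : z4 < z1 + n)
    (m1 : K (idx n z1) ∈ P) (m2 : K (idx n z2) ∉ P)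
    (m3 : K (idx n z3) ∈ P) (m4 : K (idx n z4) ∉ P) : False := by
  have hn : 0 < n := npos n
  set Λ : ℕ → ℝ := extf n τ with hΛdef
  set Ρ : ℕ → ℝ := extf n (fun i => τ i + d i) with hΡdef
  set Pp : ℕ → ℝ := extf n pr with hPpdef
  have hΡΛ : ∀ z, Ρ z = Λ z + d (idx n z) := by
    intro z; simp [hΡdef, hΛdef, extf]; ring
  -- membership in coordinates
  have mem_K : ∀ (z : ℕ) (x : Circ),
      x ∈ K (idx n z) ↔ ∃ ξ ∈ Set.Ioo (Λ z) (Ρ z), x = a + ↑ξ := by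
    intro z x
    rw [hKarc, mem_arc_iff]
    constructor
    · rintro ⟨ξ, hξ, rfl⟩
      refine ⟨ξ + (z / n : ℕ), ⟨?_, ?_⟩, by rw [coe_add_nat]⟩
      · simp [hΛdef, extf]; exact hξ.1
      · rw [hΡΛ]; simp [hΛdef, extf]; have := hξ.2; push_cast; linarith
    · rintro ⟨ξ, hξ, rfl⟩
      refine ⟨ξ - (z / n : ℕ), ⟨?_, ?_⟩, ?_⟩
      · have := hξ.1; simp [hΛdef, extf] at this; linarith
      · have := hξ.2; rw [hΡΛ] at this; simp [hΛdef, extf] at this; linarith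
      · have h2 : (↑(ξ - ((z/n:ℕ):ℝ) + ((z/n:ℕ):ℝ)) : Circ) = ↑(ξ - ((z/n:ℕ):ℝ)) :=
          coe_add_nat _ _
        rw [show ξ - ((z/n:ℕ):ℝ) + ((z/n:ℕ):ℝ) = ξ by ring] at h2
        rw [h2]
  have memF : ∀ (i : Fin n) (ξ : ℝ), ξ ∈ Set.Ioo (τ i) (τ i + d i) → a + ↑ξ ∈ K i := by
    intro i ξ hξ; rw [hKarc, mem_arc_iff]; exact ⟨ξ, hξ, rfl⟩
  have coe_shift : ∀ (ξ : ℝ) (m : ℤ), a + (↑ξ : Circ) = a + ↑(ξ - m) := by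
    intro ξ m
    have h2 : (↑(ξ - (m:ℝ) + (m:ℝ)) : Circ) = ↑(ξ - (m:ℝ)) := by
      rw [show ((m:ℝ)) = ((m:ℤ):ℝ) by push_cast; ring]; exact coe_add_int _ _
    rw [show ξ - (m:ℝ) + (m:ℝ) = ξ by ring] at h2
    rw [h2]
  have hsub : ∀ (i j : Fin n) (m : ℤ), τ i + m ≤ τ j → τ j + d j ≤ τ i + d i + m →
      K j ⊆ K i := by
    intro i j m h1 h2 x hx
    rw [hKarc, mem_arc_iff] at hx
    obtain ⟨ξ, hξ, rfl⟩ := hx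
    rw [coe_shift ξ m]
    exact memF i _ ⟨by linarith [hξ.1], by linarith [hξ.2]⟩
  have hne : ∀ i j : Fin n, i ≠ j → ¬ K j ⊆ K i := by
    intro i j hij hs
    exact hij (hKinj (hnosub j (K i) (hKF i) hs)).symm
  have hρ : ∀ i j : Fin n, i < j → τ i + d i < τ j + d j := by
    intro i j h; by_contra hc; push_neg at hc
    exact hne i j (ne_of_lt h) (hsub i j 0 (by simpa using (hτ h).le) (by simpa using hc))
  have hρw : ∀ i j : Fin n, i < j → τ j + d j < τ i + d i + 1 := by
    intro i j h; by_contra hc; push_neg at hc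
    refine hne j i (ne_of_gt h) (hsub j i (-1) ?_ ?_)
    · push_cast; have h1 := (hτm i).1; have h2 := (hτm j).2; linarith
    · push_cast; linarith
  have L1 : ∀ (t t' : Fin n), t < t' → pr t ≤ τ t' := by
    intro t t' h; by_contra hc; push_neg at hc
    exact hpriv t' t (ne_of_gt h)
      (memF t' _ ⟨hc, by linarith [(hpr t).2, hρ t t' h]⟩)
  have L2 : ∀ (t t' : Fin n), t < t' → τ t + d t ≤ pr t' := by
    intro t t' h; by_contra hc; push_neg at hc
    exact hpriv t t' (ne_of_lt h)
      (memF t _ ⟨by linarith [(hpr t').1, hτ h], hc⟩)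
  have L1w : ∀ (t t' : Fin n), t' ≤ t → pr t ≤ τ t' + 1 := by
    intro t t' h
    rcases eq_or_lt_of_le h with rfl | h
    · linarith [(hpr t').2, hd1 t']
    · by_contra hc; push_neg at hc
      refine hpriv t' t (ne_of_lt h) ?_
      rw [coe_shift (pr t) 1]
      push_cast
      exact memF t' _ ⟨by linarith, by linarith [(hpr t).2, hρw t' t h]⟩
  have L2w : ∀ (t t' : Fin n), t' ≤ t → τ t + d t ≤ pr t' + 1 := by
    intro t t' h
    rcases eq_or_lt_of_le h with rfl | h
    · linarith [(hpr t').1, hd1 t']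
    · by_contra hc; push_neg at hc
      refine hpriv t t' (ne_of_gt h) ?_
      rw [coe_shift (pr t') (-1)]
      push_cast
      have hτ1 : τ t < τ t' + 1 := by linarith [(hτm t).2, (hτm t').1]
      exact memF t _ ⟨by linarith [(hpr t').1], by linarith⟩
  have hΛP : ∀ z, Λ z < Pp z := by
    intro z; simp [hΛdef, hPpdef, extf]; exact (hpr _).1
  have hPΡ : ∀ z, Pp z < Ρ z := by
    intro z; rw [hΡΛ]; simp [hΛdef, hPpdef, extf]
    linarith [(hpr (idx n z)).1, (hpr (idx n z)).2]
  have hIl1 : ∀ z, Pp z ≤ Λ (z+1) := by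
    intro z
    rcases lt_or_ge (z % n + 1) n with h | h
    · obtain ⟨hm, hd'⟩ := step_no_wrap n h
      have hidx : idx n (z+1) = ⟨z % n + 1, h⟩ := by
        apply Fin.ext; simp [idx, hm]
      simp only [hPpdef, hΛdef, extf, hidx, hd']
      have : (idx n z) < (⟨z % n + 1, h⟩ : Fin n) := by
        simp [idx, Fin.lt_def]
      linarith [L1 (idx n z) ⟨z % n + 1, h⟩ this]
    · have hw : z % n + 1 = n := by have := Nat.mod_lt z hn; omega
      obtain ⟨hm, hd'⟩ := step_wrap n hw
      have hidx : idx n (z+1) = ⟨0, hn⟩ := by apply Fin.ext; simp [idx, hm]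
      simp only [hPpdef, hΛdef, extf, hidx, hd']
      push_cast
      linarith [L1w (idx n z) ⟨0, hn⟩ (by simp [Fin.le_def])]
  have hIl2 : ∀ z, Ρ z ≤ Pp (z+1) := by
    intro z
    rcases lt_or_ge (z % n + 1) n with h | h
    · obtain ⟨hm, hd'⟩ := step_no_wrap n h
      have hidx : idx n (z+1) = ⟨z % n + 1, h⟩ := by
        apply Fin.ext; simp [idx, hm]
      rw [hΡΛ]
      simp only [hPpdef, hΛdef, extf, hidx, hd']
      have : (idx n z) < (⟨z % n + 1, h⟩ : Fin n) := by
        simp [idx, Fin.lt_def]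
      linarith [L2 (idx n z) ⟨z % n + 1, h⟩ this]
    · have hw : z % n + 1 = n := by have := Nat.mod_lt z hn; omega
      obtain ⟨hm, hd'⟩ := step_wrap n hw
      have hidx : idx n (z+1) = ⟨0, hn⟩ := by apply Fin.ext; simp [idx, hm]
      rw [hΡΛ]
      simp only [hPpdef, hΛdef, extf, hidx, hd']
      push_cast
      linarith [L2w (idx n z) ⟨0, hn⟩ (by simp [Fin.le_def])]
  have hPlt : ∀ z, Pp z < Pp (z+1) := fun z => lt_of_le_of_lt (hIl1 z) (hΛP (z+1))
  have hPmono : StrictMono Pp := strictMono_nat_of_lt_succ hPlt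
  have hΛper : ∀ z, Λ (z + n) = Λ z + 1 := fun z => ext_add_n n τ z
  have hΡper : ∀ z, Ρ (z + n) = Ρ z + 1 := fun z => ext_add_n n _ z
  have hPper : ∀ z, Pp (z + n) = Pp z + 1 := fun z => ext_add_n n pr z
  have hidxper : ∀ z, idx n (z + n) = idx n z := fun z => idx_add_n n z
  -- the two sides
  have hz4n : n ≤ z4 := by omega
  have hz4sub : z4 - n + n = z4 := by omega
  have hP4 : Pp z4 = Pp (z4 - n) + 1 := by rw [← hz4sub, hPper, hz4sub]
  have hΡ4 : Ρ z4 = Ρ (z4 - n) + 1 := by rw [← hz4sub, hΡper, hz4sub]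
  have hidx4 : idx n (z4 - n) = idx n z4 := by rw [← hidxper, hz4sub]
  set In1 : Circ → Prop :=
    fun x => ∃ ξ ∈ Set.Ioo (Pp (z4 - n)) (Pp z2), x = a + ↑ξ with hIn1def
  set In2 : Circ → Prop :=
    fun x => ∃ ξ ∈ Set.Ioo (Pp z2) (Pp z4), x = a + ↑ξ with hIn2def
  have h4n2 : z4 - n < z2 := by omega
  have h4n1 : z4 - n ≤ z1 - 1 := by omega
  have hz11 : z1 - 1 + 1 = z1 := by omega
  have ord1 : Pp (z4 - n) < Pp z2 := hPmono h4n2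
  have ord2 : Pp z2 < Pp z4 := hPmono (by omega)
  have hdisj : ∀ x, In1 x → In2 x → False := by
    rintro x ⟨ξ₁, hξ₁, rfl⟩ ⟨ξ₂, hξ₂, he⟩
    have : (↑ξ₂ : Circ) = ↑ξ₁ := by
      have := add_left_cancel he; rw [this]
    obtain ⟨m, hm⟩ := coe_eq_coe_iff.1 this
    have hb1 : ξ₂ - ξ₁ < 1 := by
      have := hξ₁.1; have := hξ₂.2; rw [hP4] at *; linarith
    have hb2 : 0 < ξ₂ - ξ₁ := by linarith [hξ₁.2, hξ₂.1]
    have : (0:ℝ) < m ∧ (m:ℝ) < 1 := ⟨by linarith, by linarith⟩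
    have h0 : (0:ℤ) < m := by exact_mod_cast this.1
    have h1 : m < (1:ℤ) := by exact_mod_cast this.2
    omega
  -- membership of the two "cut" points
  have hp2K : (a + ↑(Pp z2)) ∈ K (idx n z2) :=
    (mem_K z2 _).2 ⟨Pp z2, ⟨hΛP z2, hPΡ z2⟩, rfl⟩
  have hp4K : (a + ↑(Pp z4)) ∈ K (idx n z4) :=
    (mem_K z4 _).2 ⟨Pp z4, ⟨hΛP z4, hPΡ z4⟩, rfl⟩
  have hexh : ∀ x : Circ, x ∉ K (idx n z2) → x ∉ K (idx n z4) → In1 x ∨ In2 x := by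
    intro x hx2 hx4
    obtain ⟨ξ, hξ, rfl⟩ := exists_lift_Ioc a x (Pp (z4 - n))
    rcases lt_trichotomy ξ (Pp z2) with h | h | h
    · exact Or.inl ⟨ξ, ⟨hξ.1, h⟩, rfl⟩
    · exact absurd (h ▸ hp2K) hx2
    · rcases eq_or_lt_of_le hξ.2 with he | hlt
      · exfalso; apply hx4; rw [he, ← hP4]; exact hp4K
      · exact Or.inr ⟨ξ, ⟨h, by rw [hP4]; exact hlt⟩, rfl⟩
  -- K (idx z1) lies in side 1, K (idx z3) lies in side 2
  have K1sub : ∀ x, x ∈ K (idx n z1) → In1 x := by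
    intro x hx
    obtain ⟨ξ, hξ, rfl⟩ := (mem_K z1 x).1 hx
    refine ⟨ξ, ⟨?_, ?_⟩, rfl⟩
    · calc Pp (z4 - n) ≤ Pp (z1 - 1) := hPmono.monotone h4n1
        _ ≤ Λ z1 := by rw [← hz11]; exact hIl1 (z1 - 1)
        _ < ξ := hξ.1
    · calc ξ < Ρ z1 := hξ.2
        _ ≤ Pp (z1 + 1) := hIl2 z1
        _ ≤ Pp z2 := hPmono.monotone (by omega)
  have K3sub : ∀ x, x ∈ K (idx n z3) → In2 x := by
    intro x hx
    obtain ⟨ξ, hξ, rfl⟩ := (mem_K z3 x).1 hx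
    refine ⟨ξ, ⟨?_, ?_⟩, rfl⟩
    · calc Pp z2 ≤ Pp (z3 - 1) := hPmono.monotone (by omega)
        _ ≤ Λ z3 := by rw [← (by omega : z3 - 1 + 1 = z3)]; exact hIl1 (z3 - 1)
        _ < ξ := hξ.1
    · calc ξ < Ρ z3 := hξ.2
        _ ≤ Pp (z3 + 1) := hIl2 z3
        _ ≤ Pp z4 := hPmono.monotone (by omega)
  -- no arc of F contains a full closed K-interval
  have FB : ∀ (z : ℕ) (A : Set Circ), A ∈ F →
      (∀ θ ∈ Set.Icc (Λ z) (Ρ z), a + ↑θ ∈ A) → False := by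
    intro z A hAF hcont
    have hKA : K (idx n z) ⊆ A := by
      intro x hx
      obtain ⟨ξ, hξ, rfl⟩ := (mem_K z x).1 hx
      exact hcont ξ ⟨hξ.1.le, hξ.2.le⟩
    have hEq : K (idx n z) = A := hnosub (idx n z) A hAF hKA
    have : (a + ↑(Λ z)) ∈ K (idx n z) := by
      rw [hEq]; exact hcont (Λ z) ⟨le_refl _, by rw [hΡΛ]; linarith [hd0 (idx n z)]⟩
    obtain ⟨w, hw, he⟩ := (mem_K z _).1 this
    obtain ⟨m, hm⟩ := coe_eq_coe_iff.1 (add_left_cancel he)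
    have hdd : Ρ z - Λ z < 1 := by rw [hΡΛ]; linarith [hd1 (idx n z)]
    have hm0 : (m:ℝ) < 0 := by linarith [hw.1]
    have hm1 : (-1:ℝ) < (m:ℝ) := by linarith [hw.2]
    have h0 : m < (0:ℤ) := by exact_mod_cast hm0
    have h1 : (-1:ℤ) < m := by exact_mod_cast hm1
    omega
  -- two points of one arc cannot lie on opposite sides
  have sameside : ∀ A ∈ F, ∀ u v : Circ, u ∈ A → v ∈ A →
      u ∉ K (idx n z2) → u ∉ K (idx n z4) → v ∉ K (idx n z2) → v ∉ K (idx n z4) →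
      In1 u → In2 v → False := by
    intro A hAF u v huA hvA hu2 hu4 hv2 hv4 hu1 hv2'
    obtain ⟨b, δ, hδ0, hδ1, rfl⟩ := hF A hAF
    obtain ⟨β, rfl⟩ := exists_rep a b
    rw [mem_arc_iff] at huA hvA
    obtain ⟨wu, hwu, hueq⟩ := huA
    obtain ⟨wv, hwv, hveq⟩ := hvA
    obtain ⟨ξu, hξu, hueq'⟩ := hu1
    obtain ⟨ξv, hξv, hveq'⟩ := hv2'
    have hmu : ∃ m : ℤ, wu = ξu + m :=
      coe_eq_coe_iff.1 (add_left_cancel (hueq ▸ hueq'))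
    have hmv : ∃ m : ℤ, wv = ξv + m :=
      coe_eq_coe_iff.1 (add_left_cancel (hveq ▸ hveq'))
    obtain ⟨mu, hmu⟩ := hmu
    obtain ⟨mv, hmv⟩ := hmv
    have hξuv : 0 < ξv - ξu := by linarith [hξu.2, hξv.1]
    have hξuv1 : ξv - ξu < 1 := by
      have := hξu.1; have := hξv.2; rw [hP4] at *; linarith
    rcases lt_trichotomy wu wv with hlt | heq | hgt
    · -- same integer shift; the arc covers [ξu, ξv] ⊇ closed K (idx z2)
      have hmm : mv = mu := by
        have h1 : wv - wu < 1 := by linarith [hwu.1, hwv.2]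
        have h2 : (0:ℝ) < wv - wu := by linarith
        have e : wv - wu = (ξv - ξu) + (mv - mu) := by rw [hmu, hmv]; push_cast; ring
        have c1 : ((mv - mu : ℤ):ℝ) < 1 := by push_cast; linarith
        have c2 : (-1:ℝ) < ((mv - mu : ℤ):ℝ) := by push_cast; linarith
        have c1' : mv - mu < 1 := by exact_mod_cast c1
        have c2' : -1 < mv - mu := by exact_mod_cast c2
        omega
      refine FB z2 _ hAF ?_
      intro θ hθ
      have hu2' : ξu ≤ Λ z2 := by
        by_contra hc; push_neg at hc
        exact hu2 ((mem_K z2 _).2 ⟨ξu, ⟨hc, lt_trans hξu.2 (hPΡ z2)⟩, hueq'⟩)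
      have hv2'' : Ρ z2 ≤ ξv := by
        by_contra hc; push_neg at hc
        exact hv2 ((mem_K z2 _).2 ⟨ξv, ⟨lt_trans (hΛP z2) hξv.1, hc⟩, hveq'⟩)
      have hθ' : θ ∈ Set.Icc ξu ξv := ⟨le_trans hu2' hθ.1, le_trans hθ.2 hv2''⟩
      have hw : θ + mu ∈ Set.Ioo β (β + δ) := by
        constructor
        · calc β < wu := hwu.1
            _ = ξu + mu := hmu
            _ ≤ θ + mu := by linarith [hθ'.1]
        · calc θ + (mu:ℝ) ≤ ξv + mu := by linarith [hθ'.2]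
            _ = ξv + mv := by rw [hmm]
            _ = wv := hmv.symm
            _ < β + δ := hwv.2
      have hmem : a + (↑(θ + (mu:ℝ)) : Circ) ∈ arc (a + ↑β) δ :=
        (mem_arc_iff).2 ⟨θ + mu, hw, rfl⟩
      have he2 : (a + (↑(θ + (mu:ℝ)) : Circ)) = a + ↑θ := by
        rw [show θ + (mu:ℝ) = θ + ((mu:ℤ):ℝ) from by push_cast; ring, coe_add_int]
      rwa [he2] at hmem
    · exact hdisj u ⟨ξu, hξu, hueq'⟩ (by
        have : u = v := by
          rw [hueq, hveq, heq]
        rw [this]; exact ⟨ξv, hξv, hveq'⟩)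
    · -- wv < wu : shift differs by one; the arc covers [ξv, ξu + 1] ⊇ closed K (idx z4)
      have hmm : mu = mv + 1 := by
        have h1 : wu - wv < 1 := by linarith [hwv.1, hwu.2]
        have h2 : (0:ℝ) < wu - wv := by linarith
        have e : wu - wv = (ξu - ξv) + (mu - mv) := by rw [hmu, hmv]; push_cast; ring
        have c1 : ((mu - mv : ℤ):ℝ) < 2 := by push_cast; linarith
        have c2 : (0:ℝ) < ((mu - mv : ℤ):ℝ) := by push_cast; linarith
        have c1' : mu - mv < 2 := by exact_mod_cast c1
        have c2' : 0 < mu - mv := by exact_mod_cast c2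
        omega
      refine FB z4 _ hAF ?_
      intro θ hθ
      have hv4' : ξv ≤ Λ z4 := by
        by_contra hc; push_neg at hc
        exact hv4 ((mem_K z4 _).2 ⟨ξv, ⟨hc, lt_trans hξv.2 (hPΡ z4)⟩, hveq'⟩)
      have hu4' : Ρ (z4 - n) ≤ ξu := by
        by_contra hc; push_neg at hc
        refine hu4 ?_
        rw [← hidx4]
        exact (mem_K (z4 - n) _).2 ⟨ξu, ⟨lt_trans (hΛP (z4 - n)) hξu.1, hc⟩, hueq'⟩
      have hθ' : θ ∈ Set.Icc ξv (ξu + 1) := by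
        constructor
        · exact le_trans hv4' hθ.1
        · have : Ρ z4 ≤ ξu + 1 := by rw [hΡ4]; linarith
          exact le_trans hθ.2 this
      have hw : θ + mv ∈ Set.Ioo β (β + δ) := by
        constructor
        · calc β < wv := hwv.1
            _ = ξv + mv := hmv
            _ ≤ θ + mv := by linarith [hθ'.1]
        · calc θ + (mv:ℝ) ≤ (ξu + 1) + mv := by linarith [hθ'.2]
            _ = ξu + mu := by rw [hmm]; push_cast; ring
            _ = wu := hmu.symm
            _ < β + δ := hwu.2
      have hmem : a + (↑(θ + (mv:ℝ)) : Circ) ∈ arc (a + ↑β) δ :=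
        (mem_arc_iff).2 ⟨θ + mv, hw, rfl⟩
      have he2 : (a + (↑(θ + (mv:ℝ)) : Circ)) = a + ↑θ := by
        rw [show θ + (mv:ℝ) = θ + ((mv:ℤ):ℝ) from by push_cast; ring, coe_add_int]
      rwa [he2] at hmem
  -- P has length at least 2
  have hchain' := hP.1.2.2
  have hlen2 : 2 ≤ P.length := by
    have hx : (a + ↑(τ (idx n z1) + d (idx n z1))) ∈ (⋃ i, K i) := by
      rw [hKcov]; trivial
    obtain ⟨s, hxs⟩ := Set.mem_iUnion.1 hx
    have hsne : s ≠ idx n z1 := by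
      rintro rfl
      rw [hKarc, mem_arc_iff] at hxs
      obtain ⟨ξ, hξ, he⟩ := hxs
      obtain ⟨m, hm⟩ := coe_eq_coe_iff.1 (add_left_cancel he)
      have c1 : (0:ℝ) < m := by linarith [hξ.2]
      have c2 : (m:ℝ) < 1 := by linarith [hξ.1, hd1 (idx n z1)]
      have c1' : (0:ℤ) < m := by exact_mod_cast c1
      have c2' : m < (1:ℤ) := by exact_mod_cast c2
      omega
    rw [hKarc, mem_arc_iff] at hxs
    obtain ⟨w, hw, he⟩ := hxs
    obtain ⟨m, hm⟩ := coe_eq_coe_iff.1 (add_left_cancel he)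
    obtain ⟨g, hg0, hgd, hgw⟩ : ∃ g : ℝ, 0 < g ∧ g ≤ d (idx n z1) ∧ g ≤ w - τ s :=
      ⟨min (d (idx n z1)) (w - τ s), lt_min (hd0 _) (by linarith [hw.1]),
        min_le_left _ _, min_le_right _ _⟩
    have hy1 : a + ↑(w - g/2) ∈ K s := memF s _ ⟨by linarith, by linarith [hw.2]⟩
    have hy2 : a + ↑(w - g/2) ∈ K (idx n z1) := by
      rw [coe_shift (w - g/2) (-m)]
      rw [show w - g/2 - ((-m : ℤ):ℝ) = (w + m) - g/2 from by push_cast; ring]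
      rw [show w + (m:ℝ) = τ (idx n z1) + d (idx n z1) from by linarith]
      exact memF _ _ ⟨by linarith, by linarith⟩
    have hQ : ArcChain F [K (idx n z1), K s] := by
      refine ⟨?_, ?_, ?_⟩
      · simp [List.nodup_cons]
        intro hKeq
        exact hsne (hKinj hKeq.symm)
      · intro A hA
        rcases List.mem_cons.1 hA with rfl | hA
        · exact hKF _
        · rcases List.mem_cons.1 hA with rfl | hA
          · exact hKF _
          · simp at hA
      · exact List.isChain_cons_cons.2 ⟨⟨_, hy2, hy1⟩, List.isChain_singleton _⟩
    have := hP.2 _ hQ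
    simpa using this
  -- consecutive intersection points avoid the two removed arcs
  have avoid : ∀ (k : ℕ) (hk : k + 1 < P.length), ∀ x,
      x ∈ (P[k]'(by omega) ∩ P[k+1]'hk) →
      x ∉ K (idx n z2) ∧ x ∉ K (idx n z4) := by
    intro k hk x hx
    constructor
    · intro hxB
      obtain ⟨Q, hQ, hQl⟩ := chain_insert_longer hP.1 (hKF (idx n z2)) m2 hk
        ⟨x, hx.1, hxB⟩ ⟨x, hxB, hx.2⟩
      have := hP.2 Q hQ; omega
    · intro hxB
      obtain ⟨Q, hQ, hQl⟩ := chain_insert_longer hP.1 (hKF (idx n z4)) m4 hk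
        ⟨x, hx.1, hxB⟩ ⟨x, hxB, hx.2⟩
      have := hP.2 Q hQ; omega
  have same_iff : ∀ A ∈ F, ∀ u v : Circ, u ∈ A → v ∈ A →
      (u ∉ K (idx n z2) ∧ u ∉ K (idx n z4)) → (v ∉ K (idx n z2) ∧ v ∉ K (idx n z4)) →
      (In1 u ↔ In1 v) := by
    intro A hAF u v huA hvA hug hvg
    constructor
    · intro h1
      rcases hexh v hvg.1 hvg.2 with h | h
      · exact h
      · exact absurd (sameside A hAF u v huA hvA hug.1 hug.2 hvg.1 hvg.2 h1 h) not_false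
    · intro h1
      rcases hexh u hug.1 hug.2 with h | h
      · exact h
      · exact absurd (sameside A hAF v u hvA huA hvg.1 hvg.2 hug.1 hug.2 h1 h) not_false
  have hmemP : ∀ (k : ℕ) (hk : k < P.length), P[k] ∈ F := fun k hk =>
    hP.1.2.1 _ (List.getElem_mem hk)
  have propagate : ∀ (k : ℕ) (hk : k + 1 < P.length), ∀ x ∈ (P[k]'(by omega) ∩ P[k+1]'hk),
      ∀ y ∈ (P[0]'(by omega) ∩ P[0+1]'(by omega)), (In1 x ↔ In1 y) := by
    intro k
    induction k with
    | zero =>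
      intro hk x hx y hy
      exact same_iff _ (hmemP 0 (by omega)) x y hx.1 hy.1 (avoid 0 hk x hx) (avoid 0 (by omega) y hy)
    | succ k ih =>
      intro hk x hx y hy
      have hk' : k + 1 < P.length := by omega
      obtain ⟨w, hw⟩ := consec_decomp hchain' hk'
      have h1 : In1 x ↔ In1 w :=
        same_iff _ (hmemP (k+1) (by omega)) x w hx.1 hw.2 (avoid (k+1) hk x hx) (avoid k hk' w hw)
      exact h1.trans (ih hk' w hw y hy)
  obtain ⟨q1, hq1l, hq1⟩ := List.mem_iff_getElem.1 m1
  obtain ⟨q3, hq3l, hq3⟩ := List.mem_iff_getElem.1 m3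
  have getlink : ∀ (q : ℕ) (hq : q < P.length), ∃ k, ∃ (hk : k + 1 < P.length),
      ∃ x, x ∈ (P[k]'(by omega) ∩ P[k+1]'hk) ∧ x ∈ P[q]'hq := by
    intro q hq
    rcases lt_or_ge (q+1) P.length with h | h
    · obtain ⟨x, hx⟩ := consec_decomp hchain' h
      exact ⟨q, h, x, hx, hx.1⟩
    · have h' : (q - 1) + 1 < P.length := by omega
      obtain ⟨x, hx⟩ := consec_decomp hchain' h'
      have e : q - 1 + 1 = q := by omega
      have hx2 := hx.2
      simp only [e] at hx2
      exact ⟨q - 1, h', x, hx, hx2⟩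
  obtain ⟨k1, hk1, x1, hx1pair, hx1mem⟩ := getlink q1 hq1l
  obtain ⟨k3, hk3, x3, hx3pair, hx3mem⟩ := getlink q3 hq3l
  have hIn1x1 : In1 x1 := K1sub x1 (hq1 ▸ hx1mem)
  have hIn2x3 : In2 x3 := K3sub x3 (hq3 ▸ hx3mem)
  obtain ⟨y0, hy0⟩ := consec_decomp hchain' (show 0+1 < P.length by omega)
  have h1 := propagate k1 hk1 x1 hx1pair y0 hy0
  have h3 := propagate k3 hk3 x3 hx3pair y0 hy0
  exact hdisj x3 (h3.2 (h1.1 hIn1x1)) hIn2x3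

end Geom

section Contig

variable (n : ℕ) [NeZero n]

lemma idx_val (i : Fin n) : idx n (i.val) = i := by
  apply Fin.ext; simp [idx, Nat.mod_eq_of_lt i.isLt]

lemma idx_cast (z : ℕ) : Fin.ofNat n z = idx n z := by
  apply Fin.ext; simp [idx, Fin.val_ofNat]

lemma idx_add_idx (u v : ℕ) : idx n u + idx n v = idx n (u + v) := by
  apply Fin.ext; simp [idx, Fin.add_def, Nat.add_mod]

lemma idx_preimage (u : ℕ) (i : Fin n) : ∃ w, w < n ∧ idx n (u + w) = i := by
  have hn : 0 < n := npos n
  refine ⟨(i.val + n - u % n) % n, Nat.mod_lt _ hn, ?_⟩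
  apply Fin.ext
  show (u + (i.val + n - u % n) % n) % n = i.val
  have h1 : u % n + (i.val + n - u % n) = i.val + n := by
    have := Nat.mod_lt u hn; omega
  have h2 : u + (i.val + n - u % n) = (i.val + n) + n * (u / n) := by
    have := Nat.div_add_mod u n; omega
  rw [Nat.add_mod u ((i.val + n - u % n) % n), Nat.mod_mod_of_dvd _ dvd_rfl,
    ← Nat.add_mod, h2, Nat.add_mul_mod_self_left, Nat.add_mod_right,
    Nat.mod_eq_of_lt i.isLt]

lemma fin_contig_or (S : Fin n → Prop) :
    (∃ (a0 : Fin n) (m : ℕ), m ≤ n ∧ ∀ i, S i ↔ ∃ j < m, i = a0 + (Fin.ofNat n j)) ∨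
    (∃ z1 z2 z3 z4 : ℕ, z1 < z2 ∧ z2 < z3 ∧ z3 < z4 ∧ z4 < z1 + n ∧
      S (idx n z1) ∧ ¬ S (idx n z2) ∧ S (idx n z3) ∧ ¬ S (idx n z4)) := by
  classical
  have hn : 0 < n := npos n
  by_cases hall : ∀ i, S i
  · left
    refine ⟨0, n, le_refl n, fun i => ⟨fun _ => ⟨i.val, i.isLt, ?_⟩, fun _ => hall i⟩⟩
    rw [zero_add, Fin.ofNat_val_eq_self]
  · push_neg at hall
    obtain ⟨t2, ht2⟩ := hall
    set r := t2.val + 1 with hr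
    have hidx_r : idx n (r + (n-1)) = t2 := by
      have e : r + (n - 1) = t2.val + n := by omega
      rw [e, idx_add_n, idx_val]
    have hsur : ∀ i : Fin n, i ≠ t2 → ∃ w, w < n - 1 ∧ idx n (r + w) = i := by
      intro i hi
      obtain ⟨w, hw, hwi⟩ := idx_preimage n r i
      have hwne : w ≠ n - 1 := by
        rintro rfl; exact hi (by rw [← hwi, hidx_r])
      exact ⟨w, by omega, hwi⟩
    set W : Finset ℕ := (Finset.range (n-1)).filter (fun w => S (idx n (r+w))) with hW
    have hWmem : ∀ w, w ∈ W ↔ (w < n - 1 ∧ S (idx n (r+w))) := by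
      intro w; simp [hW, Finset.mem_filter, Finset.mem_range]
    rcases Finset.eq_empty_or_nonempty W with hWe | Wne
    · left
      have hno : ∀ i, ¬ S i := by
        intro i hS
        rcases eq_or_ne i t2 with rfl | hni
        · exact ht2 hS
        · obtain ⟨w, hw1, hw2⟩ := hsur i hni
          have : w ∈ W := (hWmem w).2 ⟨hw1, hw2 ▸ hS⟩
          simp [hWe] at this
      refine ⟨0, 0, Nat.zero_le n, fun i => ⟨fun h => absurd h (hno i), ?_⟩⟩
      rintro ⟨j, hj, _⟩; omega
    · set lo := W.min' Wne with hlo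
      set hi := W.max' Wne with hhi
      have hloW : lo ∈ W := W.min'_mem Wne
      have hhiW : hi ∈ W := W.max'_mem Wne
      have hlohi : lo ≤ hi := W.min'_le _ hhiW
      have hhilt : hi < n - 1 := ((hWmem hi).1 hhiW).1
      by_cases hgap : ∃ w', lo < w' ∧ w' < hi ∧ w' ∉ W
      · right
        obtain ⟨w', h1, h2, h3⟩ := hgap
        refine ⟨r + lo, r + w', r + hi, r + (n-1), by omega, by omega, by omega, by omega,
          ((hWmem lo).1 hloW).2, ?_, ((hWmem hi).1 hhiW).2, by rw [hidx_r]; exact ht2⟩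
        intro hS
        exact h3 ((hWmem w').2 ⟨by omega, hS⟩)
      · left
        push_neg at hgap
        have hful : ∀ w, lo ≤ w → w ≤ hi → w ∈ W := by
          intro w h1 h2
          rcases eq_or_lt_of_le h1 with rfl | h1'
          · exact hloW
          · rcases eq_or_lt_of_le h2 with rfl | h2'
            · exact hhiW
            · exact hgap w h1' h2'
        refine ⟨idx n (r + lo), hi - lo + 1, by omega, fun i => ⟨?_, ?_⟩⟩
        · intro hS
          have hni : i ≠ t2 := fun h => ht2 (h ▸ hS)
          obtain ⟨w, hw1, hw2⟩ := hsur i hni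
          have hwW : w ∈ W := (hWmem w).2 ⟨hw1, hw2 ▸ hS⟩
          have h1 : lo ≤ w := W.min'_le _ hwW
          have h2 : w ≤ hi := W.le_max' _ hwW
          refine ⟨w - lo, by omega, ?_⟩
          rw [idx_cast, idx_add_idx, show r + lo + (w - lo) = r + w from by omega, hw2]
        · rintro ⟨j, hj, rfl⟩
          have hwW : lo + j ∈ W := hful (lo + j) (by omega) (by omega)
          have := ((hWmem (lo + j)).1 hwW).2
          rw [idx_cast, idx_add_idx]
          rw [show r + lo + j = r + (lo + j) from by omega]
          exact this

end Contig

section Priv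

lemma exists_private {F : Set (Set Circ)} {n : ℕ} [NeZero n] {K : Fin n → Set Circ}
    (hKF : ∀ i, K i ∈ F) (hKcov : (⋃ i, K i) = Set.univ)
    (hmin : ∀ (m : ℕ) (K' : Fin m → Set Circ), (∀ j, K' j ∈ F) →
      (⋃ j, K' j) = Set.univ → n ≤ m)
    (t : Fin n) : ∃ x, x ∈ K t ∧ ∀ s, s ≠ t → x ∉ K s := by
  by_contra hc
  push_neg at hc
  have hc' : ∀ x, x ∈ K t → ∃ s, s ≠ t ∧ x ∈ K s := by
    intro x hx; obtain ⟨s, h1, h2⟩ := hc x hx; exact ⟨s, h1, h2⟩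
  have hn : 0 < n := npos n
  have hn1 : ∀ j : Fin (n-1), (j : ℕ) < t.val → (j:ℕ) < n := fun j h => by omega
  have hn2 : ∀ j : Fin (n-1), (j:ℕ) + 1 < n := fun j => by have := j.isLt; omega
  set emb : Fin (n-1) → Fin n :=
    fun j => if h : (j : ℕ) < t.val then ⟨j, hn1 j h⟩ else ⟨(j:ℕ) + 1, hn2 j⟩ with hemb
  have hembne : ∀ j, emb j ≠ t := by
    intro j
    simp only [hemb]
    split
    · intro he
      rename_i h
      rw [Fin.ext_iff] at he; simp at he; omega
    · intro he
      rename_i h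
      rw [Fin.ext_iff] at he; simp at he; omega
  have hsurj : ∀ s : Fin n, s ≠ t → ∃ j, emb j = s := by
    intro s hs
    have hsne : s.val ≠ t.val := fun h => hs (Fin.ext h)
    rcases lt_or_gt_of_ne hsne with h | h
    · have hj : s.val < n - 1 := by have := t.isLt; omega
      refine ⟨⟨s.val, hj⟩, ?_⟩
      simp only [hemb]
      rw [dif_pos (by simpa using h)]
    · have hj : s.val - 1 < n - 1 := by have := s.isLt; omega
      refine ⟨⟨s.val - 1, hj⟩, ?_⟩
      simp only [hemb]
      rw [dif_neg (by simp; omega)]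
      apply Fin.ext; simp; omega
  have hcov' : (⋃ j, K (emb j)) = Set.univ := by
    apply Set.eq_univ_of_forall
    intro x
    have hx : x ∈ ⋃ i, K i := by rw [hKcov]; trivial
    obtain ⟨s, hxs⟩ := Set.mem_iUnion.1 hx
    rcases eq_or_ne s t with rfl | hst
    · obtain ⟨s', hs1, hs2⟩ := hc' x hxs
      obtain ⟨j, hj⟩ := hsurj s' hs1
      exact Set.mem_iUnion.2 ⟨j, hj ▸ hs2⟩
    · obtain ⟨j, hj⟩ := hsurj s hst
      exact Set.mem_iUnion.2 ⟨j, hj ▸ hxs⟩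
  have := hmin (n-1) (fun j => K (emb j)) (fun j => hKF _) hcov'
  omega

end Priv


/-- Balister et al., Lemma: a longest chain in `F` meets the minimal circle cover `K`,
and the set of indices `i` with `K i ∈ P` is cyclically contiguous in `ℤ/n`. -/
theorem stmt6 (F : Finset (Set Circ)) (hF : ∀ A ∈ F, IsArc A)
    (hcov : ⋃₀ (↑F : Set (Set Circ)) = Set.univ)
    (n : ℕ) [NeZero n] (K : Fin n → Set Circ) (c : Fin n → Circ) (d : Fin n → ℝ)
    (hKarc : ∀ i, K i = arc (c i) (d i) ∧ 0 < d i ∧ d i < 1)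
    (hKF : ∀ i, K i ∈ F) (hKinj : Function.Injective K)
    (hKcov : (⋃ i, K i) = Set.univ)
    (hmin : ∀ (m : ℕ) (K' : Fin m → Set Circ), (∀ j, K' j ∈ F) →
      (⋃ j, K' j) = Set.univ → n ≤ m)
    (hnosub : ∀ i, ∀ A ∈ F, K i ⊆ A → K i = A)
    (hord : CyclicallyOrdered c)
    (P : List (Set Circ)) (hP : IsLongestArcChain (↑F) P) :
    (∃ i, K i ∈ P) ∧ ∃ (a : Fin n) (m : ℕ), m ≤ n ∧
      ∀ i : Fin n, (K i ∈ P ↔ ∃ j < m, i = a + (Fin.ofNat n j)) := by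
  obtain ⟨a, τ, hτ, hτm, hca⟩ := hord
  have hKarc' : ∀ i, K i = arc (a + ↑(τ i)) (d i) := fun i => by
    rw [(hKarc i).1, hca i]
  have hd0 : ∀ i, 0 < d i := fun i => (hKarc i).2.1
  have hd1 : ∀ i, d i < 1 := fun i => (hKarc i).2.2
  have hKF' : ∀ i, K i ∈ (↑F : Set (Set Circ)) := fun i => hKF i
  have hF' : ∀ A ∈ (↑F : Set (Set Circ)), IsArc A := fun A hA => hF A hA
  have hnosub' : ∀ i, ∀ A ∈ (↑F : Set (Set Circ)), K i ⊆ A → K i = A :=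
    fun i A hA h => hnosub i A hA h
  have hmin' : ∀ (m : ℕ) (K' : Fin m → Set Circ), (∀ j, K' j ∈ (↑F : Set (Set Circ))) →
      (⋃ j, K' j) = Set.univ → n ≤ m := fun m K' h1 h2 => hmin m K' (fun j => h1 j) h2
  -- P is nonempty
  have hPne : P ≠ [] := by
    intro he
    have hQ : ArcChain (↑F) [K 0] := by
      refine ⟨by simp, ?_, List.isChain_singleton _⟩
      intro A hA
      rcases List.mem_cons.1 hA with rfl | hA
      · exact hKF' 0
      · simp at hA
    have := hP.2 _ hQ
    rw [he] at this
    simp at this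
  -- part 1
  have part1 : ∃ i, K i ∈ P := by
    by_contra hc
    push_neg at hc
    have hhead : P.head hPne ∈ P := List.head_mem hPne
    obtain ⟨b, δ, hδ0, hδ1, hbe⟩ := hF' _ (hP.1.2.1 _ hhead)
    have hne2 : (P.head hPne).Nonempty := by
      rw [hbe]
      exact ⟨b + ↑(δ/2), δ/2, ⟨by linarith, by linarith⟩, rfl⟩
    obtain ⟨x, hx⟩ := hne2
    have hxK : x ∈ ⋃ i, K i := by rw [hKcov]; trivial
    obtain ⟨s, hxs⟩ := Set.mem_iUnion.1 hxK
    obtain ⟨Q, hQ, hQl⟩ := chain_cons_longer hP.1 (hKF' s) (hc s)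
      (fun _ => ⟨x, hxs, hx⟩)
    have := hP.2 Q hQ
    omega
  refine ⟨part1, ?_⟩
  -- private points
  have hpriv_ex : ∀ t : Fin n, ∃ x, x ∈ K t ∧ ∀ s, s ≠ t → x ∉ K s :=
    exists_private hKF' hKcov hmin'
  choose p hp1 hp2 using hpriv_ex
  have hlift : ∀ t, ∃ ξ, ξ ∈ Set.Ioo (τ t) (τ t + d t) ∧ p t = a + ↑ξ := by
    intro t
    have := hp1 t
    rw [hKarc', mem_arc_iff] at this
    obtain ⟨ξ, h1, h2⟩ := this
    exact ⟨ξ, h1, h2⟩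
  choose pr hpr hpre using hlift
  have hpriv : ∀ s t, s ≠ t → (a + ↑(pr t)) ∉ K s := by
    intro s t hst
    rw [← hpre t]
    exact hp2 t s hst
  rcases fin_contig_or n (fun i => K i ∈ P) with h | h
  · exact h
  · exfalso
    obtain ⟨z1, z2, z3, z4, h12, h23, h34, h41, m1, m2, m3, m4⟩ := h
    refine geom_contra hF' hτ hτm hKarc' hd0 hd1 hKF' hKinj hKcov hnosub' hpr hpriv hP
      (z1 := z1 + n) (z2 := z2 + n) (z3 := z3 + n) (z4 := z4 + n)
      (by omega) (by omega) (by omega) (by omega) (by omega) ?_ ?_ ?_ ?_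
    · rw [idx_add_n]; exact m1
    · rw [idx_add_n]; exact m2
    · rw [idx_add_n]; exact m3
    · rw [idx_add_n]; exact m4


end
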